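/- (Antisymmetry of the elliptic R-matrix at u = -ℏ.) For Belavin's R-matrix with Ř(u) := P·R(u), the specialized matrix Ř(-ℏ) satisfies Ř(-ℏ)^{ij}_{i'j'} = -Ř(-ℏ)^{ij}_{j'i'} for all indices, so that the image of Ř(-ℏ) is contained in the antisymmetric subspace Λ²(ℂ^n) ⊂ ℂ^n ⊗ ℂ^n. -/

import Mathlib

/-- `θ^{(j)}(u) := θ_{1/2 - j/n, 1}(u + 1/2, nτ)` for `j : ZMod n`. -/
noncomputable def thetaB (n : ℕ) (τ : ℂ) (j : ZMod n) (u : ℂ) : ℂ :=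
  ∑' μ : ℤ, Complex.exp ((2 * ↑Real.pi * Complex.I) *
    (((μ : ℂ) + 1/2 - (j.val : ℂ)/(n : ℂ)) * (u + 1/2) +
      ((μ : ℂ) + 1/2 - (j.val : ℂ)/(n : ℂ))^2 * ((n : ℂ) * τ) / 2))

noncomputable def euB (n : ℕ) (x : ZMod n) : ℂ :=
  Complex.exp (-(2 * ↑Real.pi * Complex.I) * (x.val : ℂ) / (n : ℂ))

lemma euB_ne_zero (n : ℕ) (x : ZMod n) : euB n x ≠ 0 := Complex.exp_ne_zero _

lemma euB_mul (n : ℕ) [NeZero n] (x y : ZMod n) :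
    euB n x * euB n y = euB n (x + y) := by
  have hn : (n : ℂ) ≠ 0 := Nat.cast_ne_zero.2 (NeZero.ne n)
  set K : ℂ := (((x.val + y.val) / n : ℕ) : ℂ) with hKdef
  have hk : x.val + y.val = n * ((x.val + y.val) / n) + (x + y).val := by
    rw [ZMod.val_add]; exact (Nat.div_add_mod _ _).symm
  have hc : (x.val : ℂ) + (y.val : ℂ) = (n : ℂ) * K + ((x + y).val : ℂ) := by
    rw [hKdef]; exact_mod_cast congrArg (Nat.cast : ℕ → ℂ) hk
  unfold euB
  rw [← Complex.exp_add]
  have hstep : -(2 * ↑Real.pi * Complex.I) * (x.val : ℂ) +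
      -(2 * ↑Real.pi * Complex.I) * (y.val : ℂ) =
      -(2 * ↑Real.pi * Complex.I) * ((x + y).val : ℂ) +
      (-K) * (2 * ↑Real.pi * Complex.I) * n := by
    linear_combination (-(2 * (↑Real.pi : ℂ) * Complex.I)) * hc
  have harg : -(2 * ↑Real.pi * Complex.I) * (x.val : ℂ) / n +
      -(2 * ↑Real.pi * Complex.I) * (y.val : ℂ) / n =
      -(2 * ↑Real.pi * Complex.I) * ((x + y).val : ℂ) / n +
      (-K) * (2 * ↑Real.pi * Complex.I) := by
    rw [← add_div, hstep, add_div, mul_div_assoc, mul_div_cancel_right₀ _ hn]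
  rw [harg, Complex.exp_add]
  have h1 : Complex.exp ((-K) * (2 * ↑Real.pi * Complex.I)) = 1 := by
    have := Complex.exp_int_mul_two_pi_mul_I (-(((x.val + y.val) / n : ℕ) : ℤ))
    rw [hKdef]; push_cast at this ⊢; exact this
  rw [h1, mul_one]

lemma thetaB_neg (n : ℕ) [NeZero n] (τ u : ℂ) (j : ZMod n) :
    thetaB n τ j (-u) = -(euB n j * thetaB n τ (-j) u) := by
  have hn : (n : ℂ) ≠ 0 := Nat.cast_ne_zero.2 (NeZero.ne n)
  unfold thetaB
  rw [← ((Equiv.subLeft (if j = 0 then (-1 : ℤ) else 0)).tsum_eq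
    (fun μ : ℤ => Complex.exp ((2 * ↑Real.pi * Complex.I) *
      (((μ : ℂ) + 1/2 - ((-j).val : ℂ)/(n : ℂ)) * (u + 1/2) +
        ((μ : ℂ) + 1/2 - ((-j).val : ℂ)/(n : ℂ))^2 * ((n : ℂ) * τ) / 2))))]
  rw [← tsum_mul_left, ← tsum_neg]
  refine tsum_congr fun μ => ?_

  have key : ((Equiv.subLeft (if j = 0 then (-1 : ℤ) else 0) μ : ℤ) : ℂ) + 1/2
      - ((-j).val : ℂ)/(n : ℂ) = -((μ : ℂ) + 1/2 - (j.val : ℂ)/(n : ℂ)) := by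
    simp only [Equiv.subLeft_apply, ZMod.neg_val]
    by_cases h : j = 0
    · simp only [h, if_true, ZMod.val_zero, Nat.cast_zero, zero_div]
      push_cast
      ring
    · simp only [h, if_false]
      have hle : j.val ≤ n := le_of_lt (ZMod.val_lt j)
      have hsub : ((n - j.val : ℕ) : ℂ) = (n : ℂ) - (j.val : ℂ) := by
        push_cast [hle]; ring
      rw [hsub, sub_div, div_self hn]
      push_cast
      ring
  rw [key]
  set c : ℂ := (μ : ℂ) + 1/2 - (j.val : ℂ)/(n : ℂ) with hc
  have h1 : Complex.exp ((2 * ↑Real.pi * Complex.I) * (c * (-u + 1/2) + c^2 * ((n:ℂ) * τ) / 2))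
      = Complex.exp ((2 * ↑Real.pi * Complex.I) * c) *
        Complex.exp ((2 * ↑Real.pi * Complex.I) * ((-c) * (u + 1/2) + (-c)^2 * ((n:ℂ) * τ) / 2)) := by
    rw [← Complex.exp_add]; congr 1; ring
  have h2 : Complex.exp ((2 * ↑Real.pi * Complex.I) * c) = -(euB n j) := by
    have harg : (2 * ↑Real.pi * Complex.I) * c =
        (μ : ℂ) * (2 * ↑Real.pi * Complex.I) + (↑Real.pi * Complex.I +
          (-(2 * ↑Real.pi * Complex.I) * (j.val : ℂ) / n)) := by
      rw [hc]; ring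
    rw [harg, Complex.exp_add, Complex.exp_add, Complex.exp_int_mul_two_pi_mul_I,
      Complex.exp_pi_mul_I]
    unfold euB; ring
  rw [h1, h2]; ring

/-- Matrix elements of Belavin's R-matrix. -/
noncomputable def belavinR (n : ℕ) (τ hb u : ℂ) (i j i' j' : ZMod n) : ℂ :=
  if i + j = i' + j' then
    thetaB n τ (i' - j') (u + hb) / (thetaB n τ (i' - i) hb * thetaB n τ (i - j') u) *
      (∏ k ∈ Finset.range n, thetaB n τ (k : ZMod n) u) /
      (∏ k ∈ Finset.range (n - 1), thetaB n τ ((k : ZMod n) + 1) 0)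
  else 0

/-- `Ř(u)^{ij}_{i'j'} := R(u)^{ij}_{j'i'}`. -/
noncomputable def belavinRcheck (n : ℕ) (τ hb u : ℂ) (i j i' j' : ZMod n) : ℂ :=
  belavinR n τ hb u i j j' i'

/-- Antisymmetry of the elliptic R-matrix at `u = -ℏ`:
`Ř(-ℏ)^{ij}_{i'j'} = -Ř(-ℏ)^{ij}_{j'i'}`, so the image of `Ř(-ℏ)` lies in the
antisymmetric subspace `Λ²(ℂ^n) ⊂ ℂ^n ⊗ ℂ^n`. -/
theorem belavinRcheck_antisymmetric (n : ℕ) [NeZero n] (hn : 2 ≤ n) (τ : ℂ)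
    (hτ : 0 < τ.im) (hb : ℂ)
    (hlat : ¬ ∃ m k : ℤ, hb = (m : ℂ) + (k : ℂ) * τ)
    (hden1 : ∀ k : ZMod n, thetaB n τ k hb ≠ 0)
    (hden2 : ∀ k : ZMod n, thetaB n τ k (-hb) ≠ 0)
    (hden3 : (∏ k ∈ Finset.range (n - 1), thetaB n τ ((k : ZMod n) + 1) 0) ≠ 0) :
    (∀ i j i' j' : ZMod n,
      belavinRcheck n τ hb (-hb) i j i' j' = -belavinRcheck n τ hb (-hb) i j j' i') ∧
    (∀ (v : ZMod n × ZMod n → ℂ) (i' j' : ZMod n),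
      ((Matrix.of fun p q : ZMod n × ZMod n =>
          belavinRcheck n τ hb (-hb) q.1 q.2 p.1 p.2).mulVec v) (i', j') =
        -((Matrix.of fun p q : ZMod n × ZMod n =>
          belavinRcheck n τ hb (-hb) q.1 q.2 p.1 p.2).mulVec v) (j', i')) := by
  have H1 : ∀ i j i' j' : ZMod n,
      belavinRcheck n τ hb (-hb) i j i' j' = -belavinRcheck n τ hb (-hb) i j j' i' := by
    intro i j i' j'
    unfold belavinRcheck belavinR
    by_cases h : i + j = i' + j'
    · have h' : i + j = j' + i' := by rw [h]; ring
      rw [if_pos h', if_pos h]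
      have h0 : -hb + hb = 0 := by ring
      rw [h0]
      set a : ZMod n := i' - i with ha
      set b : ZMod n := i - j' with hbb
      clear_value a b
      have e1 : j' - i' = -(a + b) := by rw [ha, hbb]; ring
      have e2 : j' - i = -b := by rw [hbb]; ring
      have e3 : i - i' = -a := by rw [ha]; ring
      have e4 : i' - j' = a + b := by rw [ha, hbb]; ring
      rw [e1, e2, e3, e4]
      have r0 := thetaB_neg n τ 0 (-(a + b))
      rw [neg_zero, neg_neg] at r0
      have rA := thetaB_neg n τ hb (-a)
      rw [neg_neg] at rA
      have rB := thetaB_neg n τ hb b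
      rw [r0, rA, rB]
      have hee : euB n (-(a + b)) * euB n b = euB n (-a) := by
        rw [euB_mul]; congr 1; ring
      have hA := hden1 a
      have hB := hden1 (-b)
      have hP := euB_ne_zero n (-a)
      have hQ := euB_ne_zero n b
      have key : -(euB n (-(a + b)) * thetaB n τ (a + b) 0) /
          (thetaB n τ (-b) hb * -(euB n (-a) * thetaB n τ a hb)) =
          -(thetaB n τ (a + b) 0 /
            (thetaB n τ a hb * -(euB n b * thetaB n τ (-b) hb))) := by
        have hd1 : thetaB n τ (-b) hb * -(euB n (-a) * thetaB n τ a hb) ≠ 0 := by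
          apply mul_ne_zero hB
          simpa using mul_ne_zero hP hA
        have hd2 : thetaB n τ a hb * -(euB n b * thetaB n τ (-b) hb) ≠ 0 := by
          apply mul_ne_zero hA
          simpa using mul_ne_zero hQ hB
        rw [← neg_div, div_eq_div_iff hd1 hd2]
        linear_combination (thetaB n τ (a + b) 0 * thetaB n τ a hb *
          thetaB n τ (-b) hb) * hee
      rw [key]
      ring
    · have h' : ¬ (i + j = j' + i') := by rw [add_comm j' i']; exact h
      rw [if_neg h', if_neg h, neg_zero]
  refine ⟨H1, fun v i' j' => ?_⟩
  simp only [Matrix.mulVec, dotProduct, Matrix.of_apply]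
  rw [← Finset.sum_neg_distrib]
  refine Finset.sum_congr rfl fun q _ => ?_
  rw [H1 q.1 q.2 i' j']
  ring
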